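/- arXiv:2004.01348 — 2 statements merged into one kernel-verified Lean document; each statement's English description precedes it below -/
import Mathlib

section
/- Suppose an agent's optimal bundle (a maximizer of sum_j u_{ij} x_{ij} subject to size 1, cost ≤ 1, x ≥ 0) has dual variables α_i > 0 and all optimal goods (goods j with α_i p_j + μ_i = u_{ij}) have the same utility value. Then every optimal good has price exactly 1. -/
/-- Type C bundle characterization: if `α > 0` and all optimal goods (those with
`α * p j + μ = u j`) have the same utility, then every optimal good has price 1.
Here `x` is the agent's optimal bundle: supported on optimal goods, of size 1 and
(by complementary slackness, `α > 0`) cost exactly 1. -/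
theorem typeC_optimal_goods_price_one
    (n : ℕ) (hn : 0 < n) (u p x : Fin n → ℝ) (α μ : ℝ)
    (hα : 0 < α)
    (hdualfeas : ∀ j, u j ≤ α * p j + μ)
    (hxnn : ∀ j, 0 ≤ x j)
    (hsize : ∑ j, x j = 1)
    (hcost : ∑ j, p j * x j = 1)
    (hcs : ∀ j, 0 < x j → α * p j + μ = u j)
    (hsame : ∀ j k, α * p j + μ = u j → α * p k + μ = u k → u j = u k) :
    ∀ j, α * p j + μ = u j → p j = 1 := by
  obtain ⟨k, hk⟩ : ∃ k, 0 < x k := by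
    by_contra h
    push_neg at h
    have h0 : ∑ j, x j = 0 :=
      Finset.sum_eq_zero fun j _ => le_antisymm (h j) (hxnn j)
    rw [h0] at hsize
    norm_num at hsize
  have hkopt := hcs k hk
  have hpeq : ∀ i, α * p i + μ = u i → p i = p k := by
    intro i hi
    have hu := hsame i k hi hkopt
    have : α * p i = α * p k := by linarith
    exact mul_left_cancel₀ (ne_of_gt hα) this
  intro j hj
  have hsum : ∑ i, p i * x i = p k * ∑ i, x i := by
    rw [Finset.mul_sum]
    refine Finset.sum_congr rfl fun i _ => ?_
    rcases eq_or_lt_of_le (hxnn i) with h | h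
    · rw [← h]; ring
    · rw [hpeq i (hcs i h)]
  rw [hsum, hsize, mul_one] at hcost
  rw [hpeq j hj, hcost]
end

section
/- Let y = (1 + √17)/8, r₂ = y², r₃ = y, r₄ = 2 − 3y². Then the system of equations r₃² = r₂, r₂ + r₄ = 2(1 − r₂), and (1 − r₂)r₂ + (r₄ − 1)(r₂ + r₃) = 0 is satisfied, and moreover 0 < r₂ < 1, 0 < r₃ < 1, 0 < r₄. -/
/-- Case 1 equilibrium of the irrational example: with `y = (1+√17)/8`, `r₂ = y²`,
`r₃ = y`, `r₄ = 2 − 3y²`, the equilibrium system is satisfied and the `rᵢ` lie in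
the required ranges. -/
theorem case1_equilibrium_system :
    ∀ y r₂ r₃ r₄ : ℝ,
      y = (1 + Real.sqrt 17) / 8 → r₂ = y ^ 2 → r₃ = y → r₄ = 2 - 3 * y ^ 2 →
      r₃ ^ 2 = r₂ ∧
      r₂ + r₄ = 2 * (1 - r₂) ∧
      (1 - r₂) * r₂ + (r₄ - 1) * (r₂ + r₃) = 0 ∧
      0 < r₂ ∧ r₂ < 1 ∧ 0 < r₃ ∧ r₃ < 1 ∧ 0 < r₄ := by
  intro y r₂ r₃ r₄ hy h2 h3 h4
  have hs : Real.sqrt 17 ^ 2 = 17 := Real.sq_sqrt (by norm_num)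
  have hs0 : (0:ℝ) ≤ Real.sqrt 17 := Real.sqrt_nonneg 17
  have hlb : (4:ℝ) < Real.sqrt 17 := by
    nlinarith [hs]
  have hub : Real.sqrt 17 < 5 := by
    nlinarith [hs]
  subst hy h2 h3 h4
  refine ⟨by ring, by nlinarith, by nlinarith, by nlinarith, by nlinarith,
    by nlinarith, by nlinarith, by nlinarith⟩
end
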